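/- arXiv:2605.09094 — 3 statements merged into one kernel-verified Lean document; each statement's English description precedes it below -/
import Mathlib

section
/- In the convex linear-scalarization setting (each f_s convex with L-Lipschitz gradient, D = {z : Az = b} nonempty with rank(A) = q, λ ∈ Δ_S^+, z* a minimizer of 𝓛_λ(z) = Σ_s λ_s f_s(z) over D), the iterates z_{t+1} = P_D(z_t − (1/L)∇𝓛_λ(z_t)) from z_0 ∈ D satisfy min_{v ∈ ℝ^q} ‖𝒦(z_T, v, λ)‖² ≤ (L² / T) ‖z_0 − z*‖² for every T ≥ 1, where 𝒦(z, v, λ) = (Σ_s λ_s ∇f_s(z) + Aᵀ v; Az − b) ∈ ℝ^{k+q}. -/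
open scoped RealInnerProductSpace

private lemma hasDerivAt_comp_line {F : Type*} [NormedAddCommGroup F] [InnerProductSpace ℝ F] [CompleteSpace F]
    (f : F → ℝ) (hf : Differentiable ℝ f) (x u : F) (t : ℝ) :
    HasDerivAt (fun s : ℝ => f (x + s • u)) ⟪gradient f (x + t • u), u⟫ t := by
  have h1 : HasFDerivAt f ((InnerProductSpace.toDual ℝ F) (gradient f (x + t • u))) (x + t • u) :=
    (hf _).hasGradientAt.hasFDerivAt
  have h2 : HasDerivAt (fun s : ℝ => x + s • u) u t := by
    simpa using ((hasDerivAt_id t).smul_const u).const_add x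
  have h3 := h1.comp_hasDerivAt t h2
  simp only [InnerProductSpace.toDual_apply_apply] at h3
  exact h3

private lemma gradient_inner_le_of_convex {F : Type*} [NormedAddCommGroup F]
    [InnerProductSpace ℝ F] [CompleteSpace F] (f : F → ℝ) (hf : Differentiable ℝ f)
    (hc : ConvexOn ℝ Set.univ f) (x y : F) :
    f x + ⟪gradient f x, y - x⟫ ≤ f y := by
  set u := y - x with hu
  set φ : ℝ → ℝ := fun s => f (x + s • u) with hφ
  have hline : HasDerivAt φ ⟪gradient f x, u⟫ 0 := by
    simpa using hasDerivAt_comp_line f hf x u 0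
  have hslope : ∀ t : ℝ, t ∈ Set.Ioc (0:ℝ) 1 → slope φ 0 t ≤ f y - f x := by
    intro t ht
    have hconv := hc.2 (Set.mem_univ x) (Set.mem_univ y)
      (by linarith [ht.2] : (0:ℝ) ≤ 1 - t) (le_of_lt ht.1) (by ring)
    have hxeq : (1 - t) • x + t • y = x + t • u := by rw [hu]; module
    rw [hxeq] at hconv
    have h0 : φ 0 = f x := by simp [hφ]
    simp only [smul_eq_mul] at hconv
    have hdiff : φ t - φ 0 ≤ t * (f y - f x) := by
      rw [h0]; simp only [hφ]; nlinarith [hconv]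
    rw [slope_def_field, sub_zero, div_le_iff₀ ht.1]
    nlinarith [hdiff]
  have htend : Filter.Tendsto (slope φ 0) (nhdsWithin 0 (Set.Ioi 0)) (nhds ⟪gradient f x, u⟫) :=
    (hasDerivAt_iff_tendsto_slope.1 hline).mono_left
      (nhdsWithin_mono _ (fun z hz => ne_of_gt hz))
  have hev : ∀ᶠ t in nhdsWithin (0:ℝ) (Set.Ioi 0), slope φ 0 t ≤ f y - f x := by
    filter_upwards [Ioc_mem_nhdsGT_of_mem (Set.mem_Ico.2 ⟨le_refl 0, one_pos⟩)] with t ht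
      using hslope t ht
  have hlim := le_of_tendsto htend hev
  linarith

private lemma descent_lemma {F : Type*} [NormedAddCommGroup F] [InnerProductSpace ℝ F] [CompleteSpace F]
    (f : F → ℝ) (hf : Differentiable ℝ f) (L : ℝ) (hL : 0 < L)
    (hLip : ∀ z₁ z₂, ‖gradient f z₁ - gradient f z₂‖ ≤ L * ‖z₁ - z₂‖) (x y : F) :
    f y ≤ f x + ⟪gradient f x, y - x⟫ + L / 2 * ‖y - x‖ ^ 2 := by
  set u := y - x with hu
  set c := ⟪gradient f x, u⟫ with hc
  set ψ : ℝ → ℝ := fun t => f (x + t • u) - t * c - L * t ^ 2 / 2 * ‖u‖ ^ 2 with hψ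
  have hd : ∀ t : ℝ, HasDerivAt ψ (⟪gradient f (x + t • u), u⟫ - c - L * t * ‖u‖ ^ 2) t := by
    intro t
    have h1 := hasDerivAt_comp_line f hf x u t
    have h2 : HasDerivAt (fun t : ℝ => t * c) c t := by simpa using (hasDerivAt_id t).mul_const c
    have h3 : HasDerivAt (fun t : ℝ => L * t ^ 2 / 2 * ‖u‖ ^ 2) (L * t * ‖u‖ ^ 2) t := by
      have hp : HasDerivAt (fun t : ℝ => t ^ 2) (2 * t) t := by
        simpa using hasDerivAt_pow 2 t
      have := ((hp.const_mul L).div_const 2).mul_const (‖u‖ ^ 2)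
      exact this.congr_deriv (by ring)
    exact (h1.sub h2).sub h3
  have hanti : AntitoneOn ψ (Set.Icc 0 1) := by
    apply antitoneOn_of_deriv_nonpos (convex_Icc 0 1)
    · exact fun t _ => ((hd t).differentiableAt.continuousAt).continuousWithinAt
    · exact fun t _ => (hd t).differentiableAt.differentiableWithinAt
    · intro t ht
      rw [interior_Icc] at ht
      rw [(hd t).deriv]
      have hb : ⟪gradient f (x + t • u) - gradient f x, u⟫ ≤ L * t * ‖u‖ ^ 2 := by
        calc ⟪gradient f (x + t • u) - gradient f x, u⟫
            ≤ ‖gradient f (x + t • u) - gradient f x‖ * ‖u‖ := real_inner_le_norm _ _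
          _ ≤ (L * ‖x + t • u - x‖) * ‖u‖ := by
              have := hLip (x + t • u) x
              nlinarith [norm_nonneg u]
          _ = L * t * ‖u‖ ^ 2 := by
              rw [add_sub_cancel_left, norm_smul]
              simp [abs_of_pos ht.1]
              ring
      have : ⟪gradient f (x + t • u), u⟫ - c = ⟪gradient f (x + t • u) - gradient f x, u⟫ := by
        rw [inner_sub_left, hc]
      linarith
  have h01 := hanti (Set.mem_Icc.2 ⟨le_refl 0, zero_le_one⟩) (Set.mem_Icc.2 ⟨zero_le_one, le_refl 1⟩) zero_le_one
  have hψ0 : ψ 0 = f x := by simp [hψ]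
  have hψ1 : ψ 1 = f y - c - L / 2 * ‖u‖ ^ 2 := by
    simp only [hψ, one_pow, mul_one, one_smul, one_mul]
    rw [hu, add_sub_cancel]
  rw [hψ0, hψ1] at h01
  linarith

private lemma smooth_key {F : Type*} [NormedAddCommGroup F] [InnerProductSpace ℝ F]
    [CompleteSpace F] (f : F → ℝ) (hf : Differentiable ℝ f) (L : ℝ) (hL : 0 < L)
    (hLip : ∀ z₁ z₂, ‖gradient f z₁ - gradient f z₂‖ ≤ L * ‖z₁ - z₂‖)
    (hgrad : ∀ x y, f x + ⟪gradient f x, y - x⟫ ≤ f y) (x y : F) :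
    f x + ⟪gradient f x, y - x⟫ + 1 / (2 * L) * ‖gradient f y - gradient f x‖ ^ 2 ≤ f y := by
  set c := gradient f x with hcdef
  set φ : F → ℝ := fun z => f z - ⟪c, z⟫ with hφ
  have hdual : ∀ z : F, HasFDerivAt (fun w : F => (⟪c, w⟫ : ℝ))
      ((InnerProductSpace.toDual ℝ F) c) z := by
    intro z
    have h := ((InnerProductSpace.toDual ℝ F) c).hasFDerivAt (x := z)
    convert h using 2
    rw [InnerProductSpace.toDual_apply_apply]
  have hgφ : ∀ z, HasGradientAt φ (gradient f z - c) z := by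
    intro z
    have h := ((hf z).hasGradientAt.hasFDerivAt).sub (hdual z)
    rw [← map_sub] at h
    have h' := h.hasGradientAt
    simp only [LinearIsometryEquiv.symm_apply_apply] at h'
    exact h'
  have hφdiff : Differentiable ℝ φ := fun z => (hgφ z).differentiableAt
  have hφgrad : ∀ z, gradient φ z = gradient f z - c := fun z => (hgφ z).gradient
  have hφLip : ∀ z₁ z₂, ‖gradient φ z₁ - gradient φ z₂‖ ≤ L * ‖z₁ - z₂‖ := by
    intro z₁ z₂
    rw [hφgrad, hφgrad, sub_sub_sub_cancel_right]
    exact hLip z₁ z₂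
  have hmin : ∀ w, φ x ≤ φ w := by
    intro w
    have h := hgrad x w
    rw [inner_sub_right] at h
    simp only [hφ]
    linarith
  set d := gradient f y - c with hd
  have hdesc := descent_lemma φ hφdiff L hL hφLip y (y - (1 / L) • d)
  rw [hφgrad] at hdesc
  have hsub : y - (1 / L) • d - y = -((1 / L) • d) := by abel
  rw [hsub] at hdesc
  have hi : ⟪gradient f y - c, -((1 / L) • d)⟫ = -(1 / L * ‖d‖ ^ 2) := by
    rw [← hd, inner_neg_right, real_inner_smul_right, real_inner_self_eq_norm_sq]
  have hn : ‖-((1 / L) • d)‖ ^ 2 = (1 / L) ^ 2 * ‖d‖ ^ 2 := by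
    rw [norm_neg, norm_smul, mul_pow]
    congr 1
    rw [Real.norm_eq_abs, abs_of_pos (by positivity : (0:ℝ) < 1 / L)]
  rw [hi, hn] at hdesc
  have hmin' := hmin (y - (1 / L) • d)
  have hL0 : L ≠ 0 := ne_of_gt hL
  have harith : L / 2 * ((1 / L) ^ 2 * ‖d‖ ^ 2) = 1 / (2 * L) * ‖d‖ ^ 2 := by
    field_simp
  have hchain : φ x ≤ φ y - 1 / (2 * L) * ‖d‖ ^ 2 := by
    calc φ x ≤ φ (y - (1 / L) • d) := hmin'
      _ ≤ φ y + -(1 / L * ‖d‖ ^ 2) + L / 2 * ((1 / L) ^ 2 * ‖d‖ ^ 2) := hdesc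
      _ = φ y - 1 / L * ‖d‖ ^ 2 + 1 / (2 * L) * ‖d‖ ^ 2 := by rw [harith]; ring
      _ ≤ φ y - 1 / (2 * L) * ‖d‖ ^ 2 := by
          have h2 : 1 / L * ‖d‖ ^ 2 = 1 / (2 * L) * ‖d‖ ^ 2 + 1 / (2 * L) * ‖d‖ ^ 2 := by
            field_simp; ring
          linarith
  simp only [hφ] at hchain
  rw [inner_sub_right]
  linarith

private lemma cocoercive {F : Type*} [NormedAddCommGroup F] [InnerProductSpace ℝ F]
    [CompleteSpace F] (f : F → ℝ) (hf : Differentiable ℝ f) (L : ℝ) (hL : 0 < L)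
    (hLip : ∀ z₁ z₂, ‖gradient f z₁ - gradient f z₂‖ ≤ L * ‖z₁ - z₂‖)
    (hgrad : ∀ x y, f x + ⟪gradient f x, y - x⟫ ≤ f y) (x y : F) :
    1 / L * ‖gradient f x - gradient f y‖ ^ 2 ≤ ⟪gradient f x - gradient f y, x - y⟫ := by
  have h1 := smooth_key f hf L hL hLip hgrad x y
  have h2 := smooth_key f hf L hL hLip hgrad y x
  have hnorm : ‖gradient f x - gradient f y‖ = ‖gradient f y - gradient f x‖ := norm_sub_rev _ _
  have hi1 : ⟪gradient f x, y - x⟫ = ⟪gradient f x, y⟫ - ⟪gradient f x, x⟫ := inner_sub_right _ _ _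
  have hi2 : ⟪gradient f y, x - y⟫ = ⟪gradient f y, x⟫ - ⟪gradient f y, y⟫ := inner_sub_right _ _ _
  have hi3 : ⟪gradient f x - gradient f y, x - y⟫
      = ⟪gradient f x, x⟫ - ⟪gradient f x, y⟫ - ⟪gradient f y, x⟫ + ⟪gradient f y, y⟫ := by
    rw [inner_sub_left, inner_sub_right, inner_sub_right]; ring
  have hhalf : 1 / (2 * L) * ‖gradient f y - gradient f x‖ ^ 2
      + 1 / (2 * L) * ‖gradient f x - gradient f y‖ ^ 2
      = 1 / L * ‖gradient f x - gradient f y‖ ^ 2 := by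
    rw [← hnorm]; field_simp; ring
  linarith

private lemma aux_sq_ineq (L A B C : ℝ) (hL : 0 < L) (hAB : A ≤ B) (hA : 0 ≤ A)
    (h : 1 / L * B ^ 2 ≤ -(1 / L) * C) : A ^ 2 + C ≤ 0 := by
  have hL0 : L ≠ 0 := ne_of_gt hL
  have hB2 : B ^ 2 ≤ -C := by
    have h2 := mul_le_mul_of_nonneg_left h (le_of_lt hL)
    rw [show L * (1 / L * B ^ 2) = B ^ 2 by field_simp,
      show L * (-(1 / L) * C) = -C by field_simp] at h2
    exact h2
  nlinarith

private lemma aux_norm_le {F : Type*} [NormedAddCommGroup F] [InnerProductSpace ℝ F] (u w : F)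
    (h : ‖w - u‖ ^ 2 + ⟪w - u, u⟫ ≤ 0) : ‖w‖ ≤ ‖u‖ := by
  have h3 : ‖w - u‖ ^ 2 = ‖w‖ ^ 2 - 2 * ⟪w, u⟫ + ‖u‖ ^ 2 := by
    rw [norm_sub_sq_real]
  have h4 : ⟪w - u, u⟫ = ⟪w, u⟫ - ‖u‖ ^ 2 := by
    rw [inner_sub_left, real_inner_self_eq_norm_sq]
  have hexp : ‖w‖ ^ 2 ≤ ⟪w, u⟫ := by nlinarith [h, h3, h4]
  have hwu : ⟪w, u⟫ ≤ ‖w‖ * ‖u‖ := real_inner_le_norm w u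
  by_cases hw0 : ‖w‖ = 0
  · rw [hw0]; exact norm_nonneg u
  · have hwpos : 0 < ‖w‖ := lt_of_le_of_ne (norm_nonneg w) (Ne.symm hw0)
    nlinarith

set_option maxHeartbeats 1000000 in
/-- **KKT residual rate for the convex linear scalarization.** In the
convex linear-scalarization setting, the projected gradient iterates satisfy
`min_{v ∈ ℝ^q} ‖𝒦(z_T, v, λ)‖² ≤ (L²/T) ‖z₀ − z*‖²` for every `T ≥ 1`, where
`𝒦(z, v, λ) = (Σ_s λ_s ∇f_s(z) + Aᵀ v; Az − b)` (the rows of `A` are the vectors `a i`,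
so `Aᵀ v = Σ_i v_i a_i` and `(Az − b)_i = ⟪a i, z⟫ − b i`). -/
theorem linear_scalarization_kkt_rate
    (k S q : ℕ)
    (f : Fin S → EuclideanSpace ℝ (Fin k) → ℝ)
    (hf : ∀ s, ContDiff ℝ 1 (f s))
    (hconv : ∀ s, ConvexOn ℝ Set.univ (f s))
    (L : ℝ) (hL : 0 < L)
    (hfL : ∀ s z₁ z₂, ‖gradient (f s) z₁ - gradient (f s) z₂‖ ≤ L * ‖z₁ - z₂‖)
    (a : Fin q → EuclideanSpace ℝ (Fin k)) (b : Fin q → ℝ)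
    (hrank : LinearIndependent ℝ a)
    (D : Set (EuclideanSpace ℝ (Fin k)))
    (hD : D = {z | ∀ i, ⟪a i, z⟫ = b i})
    (hDne : D.Nonempty)
    (lam : Fin S → ℝ)
    (hlam_nonneg : ∀ s, 0 ≤ lam s) (hlam_sum : ∑ s, lam s = 1)
    (Lscal : EuclideanSpace ℝ (Fin k) → ℝ)
    (hLscal : ∀ z, Lscal z = ∑ s, lam s * f s z)
    (zs : EuclideanSpace ℝ (Fin k))
    (hzs : zs ∈ D ∧ ∀ z ∈ D, Lscal zs ≤ Lscal z)
    (proj : EuclideanSpace ℝ (Fin k) → EuclideanSpace ℝ (Fin k))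
    (hproj : ∀ x, proj x ∈ D ∧ ∀ w ∈ D, ‖x - proj x‖ ≤ ‖x - w‖)
    (z₀ : EuclideanSpace ℝ (Fin k)) (hz₀ : z₀ ∈ D)
    (zseq : ℕ → EuclideanSpace ℝ (Fin k))
    (hzseq0 : zseq 0 = z₀)
    (hzseq : ∀ t, zseq (t + 1) = proj (zseq t - (1 / L) • gradient Lscal (zseq t))) :
    ∀ T : ℕ, 1 ≤ T →
      (⨅ v : Fin q → ℝ,
          (‖∑ s, lam s • gradient (f s) (zseq T) + ∑ i, v i • a i‖ ^ 2
            + ∑ i, (⟪a i, zseq T⟫ - b i) ^ 2))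
        ≤ (L ^ 2 / T) * ‖z₀ - zs‖ ^ 2 := by
  classical
  have hdiff : ∀ s, Differentiable ℝ (f s) := fun s => (hf s).differentiable one_ne_zero
  have hLfun : Lscal = fun z => ∑ s, lam s * f s z := funext hLscal
  set g : EuclideanSpace ℝ (Fin k) → EuclideanSpace ℝ (Fin k) := fun z => ∑ s, lam s • gradient (f s) z with hg
  -- gradient of Lscal
  have hgradL : ∀ z, HasGradientAt Lscal (g z) z := by
    intro z
    have h1 : HasFDerivAt Lscal
        (∑ s, lam s • ((InnerProductSpace.toDual ℝ (EuclideanSpace ℝ (Fin k))) (gradient (f s) z))) z := by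
      rw [hLfun]
      exact HasFDerivAt.fun_sum fun s _ =>
        ((hdiff s z).hasGradientAt.hasFDerivAt).const_mul (lam s)
    have h2 : (∑ s, lam s • ((InnerProductSpace.toDual ℝ (EuclideanSpace ℝ (Fin k))) (gradient (f s) z)))
        = (InnerProductSpace.toDual ℝ (EuclideanSpace ℝ (Fin k))) (g z) := by
      rw [hg, map_sum]
      simp
    rw [h2] at h1
    simpa using h1.hasGradientAt
  have hgrad_eq : ∀ z, gradient Lscal z = g z := fun z => (hgradL z).gradient
  have hLdiff : Differentiable ℝ Lscal := fun z => (hgradL z).differentiableAt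
  have hLLip : ∀ z₁ z₂, ‖gradient Lscal z₁ - gradient Lscal z₂‖ ≤ L * ‖z₁ - z₂‖ := by
    intro z₁ z₂
    rw [hgrad_eq, hgrad_eq, hg]
    simp only
    rw [← Finset.sum_sub_distrib]
    calc ‖∑ s, (lam s • gradient (f s) z₁ - lam s • gradient (f s) z₂)‖
        ≤ ∑ s, ‖lam s • gradient (f s) z₁ - lam s • gradient (f s) z₂‖ :=
          norm_sum_le _ _
      _ ≤ ∑ s, lam s * (L * ‖z₁ - z₂‖) := by
          apply Finset.sum_le_sum
          intro s _
          rw [← smul_sub, norm_smul, Real.norm_eq_abs, abs_of_nonneg (hlam_nonneg s)]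
          exact mul_le_mul_of_nonneg_left (hfL s z₁ z₂) (hlam_nonneg s)
      _ = L * ‖z₁ - z₂‖ := by rw [← Finset.sum_mul, hlam_sum, one_mul]
  have hLgradIneq : ∀ x y, Lscal x + ⟪gradient Lscal x, y - x⟫ ≤ Lscal y := by
    intro x y
    rw [hgrad_eq, hLscal x, hLscal y, hg]
    simp only
    rw [sum_inner, ← Finset.sum_add_distrib]
    apply Finset.sum_le_sum
    intro s _
    rw [real_inner_smul_left]
    have h := gradient_inner_le_of_convex (f s) (hdiff s) (hconv s) x y
    nlinarith [hlam_nonneg s]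
  -- subspace machinery
  set V : Submodule ℝ (EuclideanSpace ℝ (Fin k)) := (Submodule.span ℝ (Set.range a))ᗮ with hV
  have hV_mem : ∀ u : EuclideanSpace ℝ (Fin k), u ∈ V ↔ ∀ i, ⟪a i, u⟫ = 0 := by
    intro u
    constructor
    · intro hu i
      exact hu (a i) (Submodule.subset_span (Set.mem_range_self i))
    · intro h
      rw [hV, Submodule.mem_orthogonal]
      intro w hw
      induction hw using Submodule.span_induction with
      | mem w hw => obtain ⟨i, rfl⟩ := hw; exact h i
      | zero => simp
      | add w₁ w₂ _ _ h1 h2 => rw [inner_add_left, h1, h2]; ring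
      | smul r w _ h1 => rw [real_inner_smul_left, h1]; ring
  have hD_mem : ∀ z, z ∈ D ↔ ∀ i, ⟪a i, z⟫ = b i := by
    intro z; rw [hD]; exact Iff.rfl
  have hDdiff : ∀ z w, z ∈ D → w ∈ D → w - z ∈ V := by
    intro z w hz hw
    rw [hV_mem]
    intro i
    rw [inner_sub_right, (hD_mem z).1 hz i, (hD_mem w).1 hw i, sub_self]
  have hDadd : ∀ z, z ∈ D → ∀ u ∈ V, z + u ∈ D := by
    intro z hz u hu
    rw [hD_mem]
    intro i
    rw [inner_add_right, (hD_mem z).1 hz i, (hV_mem u).1 hu i, add_zero]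
  set P : EuclideanSpace ℝ (Fin k) → EuclideanSpace ℝ (Fin k) :=
    fun w => (V.orthogonalProjection w : EuclideanSpace ℝ (Fin k)) with hP
  have hPmem : ∀ w, P w ∈ V := fun w => (V.orthogonalProjection w).2
  have hPorth : ∀ w, w - P w ∈ Vᗮ := fun w => V.sub_starProjection_mem_orthogonal w
  have hPsub : ∀ u v, P (u - v) = P u - P v := by
    intro u v; simp [hP, map_sub]
  have hPinner : ∀ w v, v ∈ V → ⟪w, v⟫ = ⟪P w, v⟫ := by
    intro w v hv
    have h0 : ⟪v, w - P w⟫ = 0 := (Submodule.mem_orthogonal V (w - P w)).1 (hPorth w) v hv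
    have h0' : ⟪w - P w, v⟫ = 0 := by rw [real_inner_comm]; exact h0
    rw [inner_sub_left] at h0'
    linarith
  have hPnorm : ∀ w, ‖P w‖ ≤ ‖w‖ := by
    intro w
    have h1 : ⟪P w, P w⟫ = ⟪w, P w⟫ := (hPinner w (P w) (hPmem w)).symm
    rw [real_inner_self_eq_norm_sq] at h1
    have h2 := real_inner_le_norm w (P w)
    nlinarith [norm_nonneg (P w), norm_nonneg w]
  have hproj_eq : ∀ x p, p ∈ D → x - p ∈ Vᗮ → proj x = p := by
    intro x p hp hxp
    have h2 := (hproj x).2 p hp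
    have hmemV : p - proj x ∈ V := hDdiff (proj x) p (hproj x).1 hp
    have horth : ⟪x - p, p - proj x⟫ = 0 := by
      have := (Submodule.mem_orthogonal V (x - p)).1 hxp (p - proj x) hmemV
      rw [real_inner_comm] at this
      exact this
    have hpyth : ‖x - proj x‖ ^ 2 = ‖x - p‖ ^ 2 + ‖p - proj x‖ ^ 2 := by
      have hdecomp : x - proj x = (x - p) + (p - proj x) := by abel
      rw [hdecomp, norm_add_sq_real, horth]
      ring
    have hle : ‖p - proj x‖ ^ 2 ≤ 0 := by
      nlinarith [norm_nonneg (x - proj x), norm_nonneg (x - p)]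
    have : ‖p - proj x‖ = 0 := by nlinarith [norm_nonneg (p - proj x)]
    have := sub_eq_zero.1 (norm_eq_zero.1 this)
    exact this.symm
  -- iterates stay in D and explicit step
  have hmemD : ∀ t, zseq t ∈ D := by
    intro t
    cases t with
    | zero => rw [hzseq0]; exact hz₀
    | succ n => rw [hzseq]; exact (hproj _).1
  have hstep : ∀ t, zseq (t + 1) = zseq t - (1 / L) • P (gradient Lscal (zseq t)) := by
    intro t
    rw [hzseq t]
    apply hproj_eq
    · have hEq : zseq t - (1 / L) • P (gradient Lscal (zseq t))
          = zseq t + (-(1 / L)) • P (gradient Lscal (zseq t)) := by module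
      rw [hEq]
      exact hDadd _ (hmemD t) _ (V.smul_mem _ (hPmem _))
    · have hEq : zseq t - (1 / L) • gradient Lscal (zseq t)
          - (zseq t - (1 / L) • P (gradient Lscal (zseq t)))
          = (-(1 / L)) • (gradient Lscal (zseq t) - P (gradient Lscal (zseq t))) := by
        module
      rw [hEq]
      exact Submodule.smul_mem _ _ (hPorth _)
  set N : ℕ → ℝ := fun t => ‖P (gradient Lscal (zseq t))‖ with hN
  have hstep_sub : ∀ t, zseq (t + 1) - zseq t = -((1 / L) • P (gradient Lscal (zseq t))) := by
    intro t; rw [hstep t]; abel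
  have hPg_inner : ∀ w, ⟪w, P w⟫ = ‖P w‖ ^ 2 := by
    intro w
    rw [hPinner w (P w) (hPmem w), real_inner_self_eq_norm_sq]
  have hL0 : L ≠ 0 := ne_of_gt hL
  -- descent inequality
  have hdesc : ∀ t, Lscal (zseq (t + 1)) ≤ Lscal (zseq t) - 1 / (2 * L) * N t ^ 2 := by
    intro t
    have h := descent_lemma Lscal hLdiff L hL hLLip (zseq t) (zseq (t + 1))
    rw [hstep_sub t] at h
    rw [inner_neg_right, real_inner_smul_right, hPg_inner] at h
    have hn : ‖-((1 / L) • P (gradient Lscal (zseq t)))‖ ^ 2 = (1 / L) ^ 2 * N t ^ 2 := by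
      rw [norm_neg, norm_smul, mul_pow, hN]
      congr 1
      rw [Real.norm_eq_abs, abs_of_pos (by positivity : (0:ℝ) < 1 / L)]
    rw [hn] at h
    have harith : L / 2 * ((1 / L) ^ 2 * N t ^ 2) = 1 / (2 * L) * N t ^ 2 := by
      field_simp
    have hN2 : 1 / L * N t ^ 2 = 1 / (2 * L) * N t ^ 2 + 1 / (2 * L) * N t ^ 2 := by
      field_simp; ring
    simp only [hN]
    simp only [hN] at harith hN2
    linarith [h, harith, hN2]
  -- monotone gradient-mapping norm
  have hmono : ∀ t, N (t + 1) ≤ N t := by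
    intro t
    set u := P (gradient Lscal (zseq t)) with hu
    set w := P (gradient Lscal (zseq (t + 1))) with hw
    have hco := cocoercive Lscal hLdiff L hL hLLip hLgradIneq (zseq (t + 1)) (zseq t)
    rw [hstep_sub t] at hco
    have hdV : zseq (t + 1) - zseq t ∈ V := by
      rw [hstep_sub t]
      exact Submodule.neg_mem _ (Submodule.smul_mem _ _ (hPmem _))
    rw [hstep_sub t] at hdV
    have hrw : ⟪gradient Lscal (zseq (t + 1)) - gradient Lscal (zseq t), -((1 / L) • u)⟫
        = -(1 / L) * ⟪w - u, u⟫ := by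
      rw [hPinner _ _ (Submodule.neg_mem _ (Submodule.smul_mem _ _ (hPmem _)) : -((1/L) • u) ∈ V)]
      rw [hPsub, ← hw, ← hu, inner_neg_right, real_inner_smul_right]
      ring
    rw [hrw] at hco
    have hnormle : ‖w - u‖ ≤ ‖gradient Lscal (zseq (t + 1)) - gradient Lscal (zseq t)‖ := by
      rw [hw, hu, ← hPsub]
      exact hPnorm _
    have hkey : ‖w - u‖ ^ 2 + ⟪w - u, u⟫ ≤ 0 :=
      aux_sq_ineq L ‖w - u‖ ‖gradient Lscal (zseq (t + 1)) - gradient Lscal (zseq t)‖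
        ⟪w - u, u⟫ hL hnormle (norm_nonneg _) hco
    have := aux_norm_le u w hkey
    simp only [hN]
    exact this
  have hantitone : ∀ t t', t ≤ t' → N t' ≤ N t := by
    intro t t' h
    induction h with
    | refl => exact le_refl _
    | step h ih => exact le_trans (hmono _) ih
  -- first-order optimality at zs
  have hzs_grad : ∀ u, u ∈ V → ⟪gradient Lscal zs, u⟫ = 0 := by
    intro u hu
    have h0 : zs + (0:ℝ) • u = zs := by rw [zero_smul, add_zero]
    have hline := hasDerivAt_comp_line Lscal hLdiff zs u 0
    rw [h0] at hline
    have hmin : IsLocalMin (fun s : ℝ => Lscal (zs + s • u)) 0 := by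
      apply Filter.Eventually.of_forall
      intro s
      show Lscal (zs + (0:ℝ) • u) ≤ Lscal (zs + s • u)
      rw [h0]
      exact hzs.2 _ (hDadd _ hzs.1 _ (V.smul_mem s hu))
    exact hmin.hasDerivAt_eq_zero hline
  -- initial gap bound
  have hinit : Lscal z₀ - Lscal zs ≤ L / 2 * ‖z₀ - zs‖ ^ 2 := by
    have h := descent_lemma Lscal hLdiff L hL hLLip zs z₀
    rw [hzs_grad (z₀ - zs) (hDdiff zs z₀ hzs.1 hz₀)] at h
    linarith
  -- telescoping
  have htel : ∀ T : ℕ, Lscal (zseq T) + 1 / (2 * L) * ∑ t ∈ Finset.range T, N t ^ 2 ≤ Lscal z₀ := by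
    intro T
    induction T with
    | zero => simp [hzseq0]
    | succ n ih =>
      rw [Finset.sum_range_succ, mul_add]
      have h := hdesc n
      linarith
  intro T hT
  have hTpos : (0:ℝ) < (T:ℝ) := by exact_mod_cast Nat.lt_of_lt_of_le Nat.zero_lt_one hT
  have hNT : (T:ℝ) * N T ^ 2 ≤ L ^ 2 * ‖z₀ - zs‖ ^ 2 := by
    have h1 : (T:ℝ) * N T ^ 2 ≤ ∑ t ∈ Finset.range T, N t ^ 2 := by
      calc (T:ℝ) * N T ^ 2 = ∑ _t ∈ Finset.range T, N T ^ 2 := by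
            rw [Finset.sum_const, Finset.card_range, nsmul_eq_mul]
        _ ≤ ∑ t ∈ Finset.range T, N t ^ 2 := by
            apply Finset.sum_le_sum
            intro t ht
            exact pow_le_pow_left₀ (norm_nonneg _) (hantitone t T (le_of_lt (Finset.mem_range.1 ht))) 2
    have h2 : 1 / (2 * L) * ∑ t ∈ Finset.range T, N t ^ 2 ≤ Lscal z₀ - Lscal (zseq T) := by
      linarith [htel T]
    have h3 : Lscal zs ≤ Lscal (zseq T) := hzs.2 _ (hmemD T)
    have h4 : ∑ t ∈ Finset.range T, N t ^ 2 ≤ 2 * L * (Lscal z₀ - Lscal zs) := by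
      have h5 := mul_le_mul_of_nonneg_left h2 (le_of_lt (by positivity : (0:ℝ) < 2 * L))
      rw [show 2 * L * (1 / (2 * L) * ∑ t ∈ Finset.range T, N t ^ 2)
          = ∑ t ∈ Finset.range T, N t ^ 2 by field_simp] at h5
      nlinarith [h5, h3, hL]
    nlinarith [h1, h4, hinit, hL]
  have hfinal : N T ^ 2 ≤ L ^ 2 / (T:ℝ) * ‖z₀ - zs‖ ^ 2 := by
    rw [div_mul_eq_mul_div, le_div_iff₀ hTpos]
    nlinarith [hNT]
  -- conclude via the infimum
  have hzT := hmemD T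
  have hspan_eq : Vᗮ = Submodule.span ℝ (Set.range a) := by
    rw [hV]
    exact Submodule.orthogonal_orthogonal _
  have hspan_mem : P (gradient Lscal (zseq T)) - gradient Lscal (zseq T)
      ∈ Submodule.span ℝ (Set.range a) := by
    rw [← hspan_eq]
    have := Submodule.neg_mem _ (hPorth (gradient Lscal (zseq T)))
    simpa [neg_sub] using this
  obtain ⟨v₀, hv₀⟩ := (Submodule.mem_span_range_iff_exists_fun ℝ).1 hspan_mem
  apply ciInf_le_of_le (c := v₀)
  · refine ⟨0, ?_⟩
    rintro r ⟨v, rfl⟩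
    positivity
  · have hsumg : ∑ s, lam s • gradient (f s) (zseq T) = gradient Lscal (zseq T) :=
      (hgrad_eq (zseq T)).symm
    rw [hsumg, hv₀]
    have habel : gradient Lscal (zseq T)
        + (P (gradient Lscal (zseq T)) - gradient Lscal (zseq T))
        = P (gradient Lscal (zseq T)) := by abel
    rw [habel]
    have hres : ∀ i ∈ Finset.univ, ((⟪a i, zseq T⟫ : ℝ) - b i) ^ 2 = 0 := by
      intro i _
      rw [(hD_mem _).1 hzT i, sub_self]
      ring
    rw [Finset.sum_eq_zero hres, add_zero]
    exact hfinal
end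

section
/- Consider one step of the WC-Penalty iteration at θ_t = (ρ_t, z_t, δ_t) ∈ C with d_t = (θ_t − θ_{t+1})/η and components d_{t,ρ}, d_{t,z}, d_{t,δ}. Suppose ‖∇f_s(z)‖ ≤ M for all z and s ∈ [S], each λ_s ∈ (0, 1), and the minimum singular value of the Jacobian ∇h(z_t) is at least σ > 0. Then the constraint residual satisfies ‖h(z_t)‖ ≤ ((3√S · M + 1) ‖d_t‖ + M) / (u σ). -/
open scoped RealInnerProductSpace

set_option maxHeartbeats 1600000 in
/-- **one-step constraint residual bound for WC-Penalty.** Consider one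
step of the WC-Penalty iteration at `θ_t = (ρ, z, δ) ∈ C`, with update direction
`d_t = (θ_t − θ_{t+1})/η` having components `dρ`, `dz`, `dδ`. If `‖∇f_s(z')‖ ≤ M` for all
`z'` and `s`, each `λ_s ∈ (0,1)`, and the minimum singular value of the Jacobian
`∇h(z)` at `z = z_t` is at least `σ > 0`, then
`‖h(z_t)‖ ≤ ((3√S·M + 1)‖d_t‖ + M)/(uσ)`. -/
theorem wcPenalty_constraint_residual_bound
    (k S q : ℕ)
    (f : Fin S → EuclideanSpace ℝ (Fin k) → ℝ)
    (h : Fin q → EuclideanSpace ℝ (Fin k) → ℝ)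
    (hf : ∀ s, ContDiff ℝ 1 (f s))
    (hh : ∀ i, ContDiff ℝ 1 (h i))
    (M σ u v η : ℝ) (hM : 0 < M) (hσ : 0 < σ)
    (hu : 0 < u) (hv : 0 < v) (hη : 0 < η)
    (hgradf : ∀ (s : Fin S) (z' : EuclideanSpace ℝ (Fin k)), ‖gradient (f s) z'‖ ≤ M)
    (lam : Fin S → ℝ) (hlam : ∀ s, 0 < lam s ∧ lam s < 1)
    -- the current iterate `θ_t = (ρ, z, δ) ∈ C`
    (ρ : ℝ) (z : EuclideanSpace ℝ (Fin k)) (δ : Fin S → ℝ) (hδ : ∀ s, 0 ≤ δ s)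
    -- minimum singular value of `∇h(z_t)` is at least `σ`
    (hsing : ∀ w : Fin q → ℝ,
        σ ^ 2 * ∑ i, (w i) ^ 2 ≤ ‖∑ i, w i • gradient (h i) z‖ ^ 2)
    -- components of the update direction `d_t = (θ_t − θ_{t+1})/η`
    (dρ : ℝ) (dz : EuclideanSpace ℝ (Fin k)) (dδ : Fin S → ℝ)
    (hdρ : dρ = 1 - v * ∑ s, (lam s * f s z + δ s - ρ))
    (hdz : dz = u • ∑ i, h i z • gradient (h i) z
        + v • ∑ s, ((lam s * f s z + δ s - ρ) * lam s) • gradient (f s) z)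
    (hdδ : ∀ s, dδ s = min (v * (lam s * f s z + δ s - ρ)) (δ s / η))
    (dnorm : ℝ)
    (hdnorm : dnorm = Real.sqrt (dρ ^ 2 + ‖dz‖ ^ 2 + ∑ s, (dδ s) ^ 2)) :
    Real.sqrt (∑ i, (h i z) ^ 2)
      ≤ ((3 * Real.sqrt S * M + 1) * dnorm + M) / (u * σ) := by

  have hun : (0:ℝ) < u * σ := mul_pos hu hσ
  set G : EuclideanSpace ℝ (Fin k) := ∑ i, h i z • gradient (h i) z with hG
  set F : EuclideanSpace ℝ (Fin k) :=
    ∑ s, ((lam s * f s z + δ s - ρ) * lam s) • gradient (f s) z with hF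
  set a : Fin S → ℝ := fun s => v * (lam s * f s z + δ s - ρ) with ha
  -- Step 1: σ √(∑ h²) ≤ ‖G‖
  have hS1 : σ * Real.sqrt (∑ i, (h i z) ^ 2) ≤ ‖G‖ := by
    have h0 := hsing (fun i => h i z)
    have h1 : Real.sqrt (σ ^ 2 * ∑ i, (h i z) ^ 2) ≤ Real.sqrt (‖G‖ ^ 2) :=
      Real.sqrt_le_sqrt h0
    rwa [Real.sqrt_mul (sq_nonneg σ) _, Real.sqrt_sq hσ.le,
      Real.sqrt_sq (norm_nonneg _)] at h1
  -- rewrite v • F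
  have hvF' : v • F = ∑ s, (a s * lam s) • gradient (f s) z := by
    rw [hF, Finset.smul_sum]
    refine Finset.sum_congr rfl fun s _ => ?_
    rw [smul_smul]
    congr 1
    simp only [ha]
    ring
  have hvF : ‖v • F‖ ≤ M * ∑ s, |a s| := by
    rw [hvF', Finset.mul_sum]
    refine (norm_sum_le _ _).trans (Finset.sum_le_sum fun s _ => ?_)
    rw [norm_smul, Real.norm_eq_abs, abs_mul, abs_of_pos (hlam s).1]
    calc |a s| * lam s * ‖gradient (f s) z‖ ≤ |a s| * 1 * M := by
          apply mul_le_mul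
          · exact mul_le_mul_of_nonneg_left (le_of_lt (hlam s).2) (abs_nonneg _)
          · exact hgradf s z
          · exact norm_nonneg _
          · positivity
      _ = M * |a s| := by ring
  -- Step 2
  have hS2 : u * ‖G‖ ≤ ‖dz‖ + M * ∑ s, |a s| := by
    have hdz' : u • G = dz - v • F := by rw [hdz]; abel
    calc u * ‖G‖ = ‖u • G‖ := by
          rw [norm_smul, Real.norm_of_nonneg hu.le]
      _ = ‖dz - v • F‖ := by rw [hdz']
      _ ≤ ‖dz‖ + ‖v • F‖ := norm_sub_le _ _
      _ ≤ ‖dz‖ + M * ∑ s, |a s| := by linarith [hvF]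
  -- ∑ a = 1 - dρ
  have hsum_a : ∑ s, a s = 1 - dρ := by
    rw [hdρ, Finset.mul_sum]
    simp only [ha]
    ring
  -- per-term: |a s| ≤ a s + 2 |dδ s|
  have hkey : ∀ s, |a s| ≤ a s + 2 * |dδ s| := by
    intro s
    rcases le_or_gt 0 (a s) with hpos | hneg
    · rw [abs_of_nonneg hpos]; linarith [abs_nonneg (dδ s)]
    · have hdd : dδ s = a s := by
        rw [hdδ s]
        exact min_eq_left (le_trans hneg.le (div_nonneg (hδ s) hη.le))
      rw [abs_of_neg hneg, hdd, abs_of_neg hneg]; linarith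
  have habs_sum : ∑ s, |a s| ≤ (1 - dρ) + 2 * ∑ s, |dδ s| := by
    calc ∑ s, |a s| ≤ ∑ s, (a s + 2 * |dδ s|) := Finset.sum_le_sum fun s _ => hkey s
      _ = (∑ s, a s) + 2 * ∑ s, |dδ s| := by
          rw [Finset.sum_add_distrib, Finset.mul_sum]
      _ = (1 - dρ) + 2 * ∑ s, |dδ s| := by rw [hsum_a]
  -- Cauchy-Schwarz: ∑ |dδ| ≤ √S √(∑ dδ²)
  have hCS : ∑ s, |dδ s| ≤ Real.sqrt S * Real.sqrt (∑ s, (dδ s) ^ 2) := by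
    have h1 : (∑ s, |dδ s|) ^ 2 ≤ (S : ℝ) * ∑ s, (dδ s) ^ 2 := by
      have := Finset.sum_mul_sq_le_sq_mul_sq Finset.univ (fun _ : Fin S => (1:ℝ))
        (fun s => |dδ s|)
      simpa [sq_abs] using this
    have h2 : ∑ s, |dδ s| = Real.sqrt ((∑ s, |dδ s|) ^ 2) := by
      rw [Real.sqrt_sq (Finset.sum_nonneg fun s _ => abs_nonneg _)]
    rw [h2, ← Real.sqrt_mul (Nat.cast_nonneg S)]
    exact Real.sqrt_le_sqrt h1
  -- dnorm component bounds
  have hdnn : 0 ≤ dnorm := by rw [hdnorm]; exact Real.sqrt_nonneg _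
  have hsumsq : (0:ℝ) ≤ ∑ s, (dδ s) ^ 2 := Finset.sum_nonneg fun s _ => sq_nonneg _
  have hbρ : |dρ| ≤ dnorm := by
    rw [hdnorm, ← Real.sqrt_sq_eq_abs]
    apply Real.sqrt_le_sqrt
    nlinarith [sq_nonneg ‖dz‖]
  have hbz : ‖dz‖ ≤ dnorm := by
    have h1 : Real.sqrt (‖dz‖ ^ 2) ≤ Real.sqrt (dρ ^ 2 + ‖dz‖ ^ 2 + ∑ s, (dδ s) ^ 2) :=
      Real.sqrt_le_sqrt (by nlinarith [sq_nonneg dρ])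
    rwa [Real.sqrt_sq (norm_nonneg _), ← hdnorm] at h1
  have hbδ : Real.sqrt (∑ s, (dδ s) ^ 2) ≤ dnorm := by
    rw [hdnorm]
    apply Real.sqrt_le_sqrt
    nlinarith [sq_nonneg dρ, sq_nonneg ‖dz‖]
  -- main bound
  have hmain : u * ‖G‖ ≤ (3 * Real.sqrt S * M + 1) * dnorm + M := by
    rcases Nat.eq_zero_or_pos S with hS0 | hS1'
    · have hE : IsEmpty (Fin S) := by rw [hS0]; exact Fin.isEmpty
      have hz0 : ∑ s, |a s| = 0 := by rw [Finset.univ_eq_empty]; simp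
      have h1 : u * ‖G‖ ≤ ‖dz‖ := by rw [hz0] at hS2; linarith
      have h2 : u * ‖G‖ ≤ dnorm := le_trans h1 hbz
      have hsq0 : Real.sqrt (S : ℝ) = 0 := by rw [hS0]; simp
      rw [hsq0]
      nlinarith
    · have hS1le : (1:ℝ) ≤ Real.sqrt S := by
        rw [show (1:ℝ) = Real.sqrt 1 from (Real.sqrt_one).symm]
        apply Real.sqrt_le_sqrt
        exact_mod_cast hS1'
      have hdd : ∑ s, |dδ s| ≤ Real.sqrt S * dnorm :=
        hCS.trans (mul_le_mul_of_nonneg_left hbδ (Real.sqrt_nonneg _))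
      have h1dρ : 1 - dρ ≤ 1 + Real.sqrt S * dnorm := by
        have hnd : -dρ ≤ |dρ| := neg_le_abs dρ
        have h2 : |dρ| ≤ Real.sqrt S * dnorm := by
          calc |dρ| ≤ dnorm := hbρ
            _ = 1 * dnorm := (one_mul _).symm
            _ ≤ Real.sqrt S * dnorm := mul_le_mul_of_nonneg_right hS1le hdnn
        linarith [neg_le_abs dρ]
      have habs : ∑ s, |a s| ≤ 1 + 3 * Real.sqrt S * dnorm := by
        have := habs_sum
        nlinarith
      calc u * ‖G‖ ≤ ‖dz‖ + M * ∑ s, |a s| := hS2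
        _ ≤ dnorm + M * (1 + 3 * Real.sqrt S * dnorm) := by
            have : M * ∑ s, |a s| ≤ M * (1 + 3 * Real.sqrt S * dnorm) :=
              mul_le_mul_of_nonneg_left habs hM.le
            linarith
        _ = (3 * Real.sqrt S * M + 1) * dnorm + M := by ring
  -- finish
  rw [le_div_iff₀ hun]
  calc Real.sqrt (∑ i, (h i z) ^ 2) * (u * σ)
      = u * (σ * Real.sqrt (∑ i, (h i z) ^ 2)) := by ring
    _ ≤ u * ‖G‖ := mul_le_mul_of_nonneg_left hS1 hu.le
    _ ≤ (3 * Real.sqrt S * M + 1) * dnorm + M := hmain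
end

section
/- Consider the WC-Penalty iterates θ_t = (ρ_t, z_t, δ_t) with θ_0 ∈ C and ρ_0 ≥ 0. Suppose f_s(z) > 0 for all z and s ∈ [S], η ≤ 1, v S ≥ 1, and the step size satisfies η ≤ 1/L_P where L_P is the Lipschitz constant of ∇P. Then ρ_t ≥ −2 for all t ≥ 0. -/
open scoped RealInnerProductSpace

noncomputable section

/-- The `ρ`-component of `∇P(θ)` for the penalty
`P(θ) = ρ + (u/2) Σ_i h_i(z)² + (v/2) Σ_s (λ_s f_s(z) + δ_s − ρ)²`. -/
def gradPρ (k S q : ℕ)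
    (f : Fin S → EuclideanSpace ℝ (Fin k) → ℝ)
    (h : Fin q → EuclideanSpace ℝ (Fin k) → ℝ)
    (lam : Fin S → ℝ) (u v : ℝ)
    (θ : ℝ × EuclideanSpace ℝ (Fin k) × (Fin S → ℝ)) : ℝ :=
  1 - v * ∑ s, (lam s * f s θ.2.1 + θ.2.2 s - θ.1)

/-- The `z`-component of `∇P(θ)`. -/
def gradPz (k S q : ℕ)
    (f : Fin S → EuclideanSpace ℝ (Fin k) → ℝ)
    (h : Fin q → EuclideanSpace ℝ (Fin k) → ℝ)
    (lam : Fin S → ℝ) (u v : ℝ)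
    (θ : ℝ × EuclideanSpace ℝ (Fin k) × (Fin S → ℝ)) : EuclideanSpace ℝ (Fin k) :=
  u • ∑ i, h i θ.2.1 • gradient (h i) θ.2.1
    + v • ∑ s, ((lam s * f s θ.2.1 + θ.2.2 s - θ.1) * lam s) • gradient (f s) θ.2.1

/-- The `δ`-component of `∇P(θ)`. -/
def gradPδ (k S q : ℕ)
    (f : Fin S → EuclideanSpace ℝ (Fin k) → ℝ)
    (h : Fin q → EuclideanSpace ℝ (Fin k) → ℝ)
    (lam : Fin S → ℝ) (u v : ℝ)
    (θ : ℝ × EuclideanSpace ℝ (Fin k) × (Fin S → ℝ)) : Fin S → ℝ :=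
  fun s => v * (lam s * f s θ.2.1 + θ.2.2 s - θ.1)

/-- One step of the WC-Penalty iteration `θ ↦ P_C(θ − η ∇P(θ))`: the projection onto
`C = ℝ × ℝ^k × ℝ_+^S` leaves `(ρ, z)` unchanged and clips each `δ_s` at `0`. -/
def penStep (k S q : ℕ)
    (f : Fin S → EuclideanSpace ℝ (Fin k) → ℝ)
    (h : Fin q → EuclideanSpace ℝ (Fin k) → ℝ)
    (lam : Fin S → ℝ) (u v η : ℝ)
    (θ : ℝ × EuclideanSpace ℝ (Fin k) × (Fin S → ℝ)) :
    ℝ × EuclideanSpace ℝ (Fin k) × (Fin S → ℝ) :=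
  ( θ.1 - η * gradPρ k S q f h lam u v θ,
    θ.2.1 - η • gradPz k S q f h lam u v θ,
    fun s => max (θ.2.2 s - η * gradPδ k S q f h lam u v θ s) 0 )

/-- **lower bound on `ρ_t`.** For the WC-Penalty iterates started at
`θ₀ ∈ C` with `ρ₀ ≥ 0`, if the objectives are positive, `η ≤ 1`, `v S ≥ 1`, and
`η ≤ 1/L_P` where `L_P` is the Lipschitz constant of `∇P`, then `ρ_t ≥ −2` for all `t`. -/
theorem wcPenalty_rho_lower_bound
    (k S q : ℕ)
    (f : Fin S → EuclideanSpace ℝ (Fin k) → ℝ)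
    (h : Fin q → EuclideanSpace ℝ (Fin k) → ℝ)
    (hf : ∀ s, ContDiff ℝ 1 (f s))
    (hh : ∀ i, ContDiff ℝ 1 (h i))
    (hfpos : ∀ s z, 0 < f s z)
    (lam : Fin S → ℝ) (hlam_pos : ∀ s, 0 < lam s) (hlam_sum : ∑ s, lam s = 1)
    (u v η LP : ℝ) (hu : 0 < u) (hv : 0 < v) (hηpos : 0 < η) (hLP : 0 < LP)
    -- `∇P` is `L_P`-Lipschitz (Euclidean norm on `ℝ × ℝ^k × ℝ^S`)
    (hPLip : ∀ θ₁ θ₂ : ℝ × EuclideanSpace ℝ (Fin k) × (Fin S → ℝ),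
        (gradPρ k S q f h lam u v θ₁ - gradPρ k S q f h lam u v θ₂) ^ 2
          + ‖gradPz k S q f h lam u v θ₁ - gradPz k S q f h lam u v θ₂‖ ^ 2
          + ∑ s, (gradPδ k S q f h lam u v θ₁ s - gradPδ k S q f h lam u v θ₂ s) ^ 2
        ≤ LP ^ 2 * ((θ₁.1 - θ₂.1) ^ 2 + ‖θ₁.2.1 - θ₂.2.1‖ ^ 2
            + ∑ s, (θ₁.2.2 s - θ₂.2.2 s) ^ 2))
    (hη1 : η ≤ 1) (hvS : 1 ≤ v * S) (hηLP : η ≤ 1 / LP)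
    -- iterates started at `θ₀ ∈ C` with `ρ₀ ≥ 0`
    (θ₀ : ℝ × EuclideanSpace ℝ (Fin k) × (Fin S → ℝ))
    (hρ₀ : 0 ≤ θ₀.1) (hδ₀ : ∀ s, 0 ≤ θ₀.2.2 s)
    (θ : ℕ → ℝ × EuclideanSpace ℝ (Fin k) × (Fin S → ℝ))
    (hθ0 : θ 0 = θ₀)
    (hθstep : ∀ t, θ (t + 1) = penStep k S q f h lam u v η (θ t)) :
    ∀ t, -2 ≤ (θ t).1 := by
  -- Step 1: `v * S ≤ LP` from the Lipschitz bound applied to two points differing only in `ρ`.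
  have hvSnn : (0:ℝ) ≤ v * S := by positivity
  have hvSLP : v * S ≤ LP := by
    have h1 := hPLip ((1:ℝ), (0:EuclideanSpace ℝ (Fin k)), (0:Fin S → ℝ))
      ((0:ℝ), (0:EuclideanSpace ℝ (Fin k)), (0:Fin S → ℝ))
    have hρdiff : gradPρ k S q f h lam u v ((1:ℝ), (0:EuclideanSpace ℝ (Fin k)), (0:Fin S → ℝ))
        - gradPρ k S q f h lam u v ((0:ℝ), (0:EuclideanSpace ℝ (Fin k)), (0:Fin S → ℝ))
        = v * S := by
      simp only [gradPρ, Pi.zero_apply, add_zero, sub_zero]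
      rw [Finset.sum_sub_distrib]
      simp [mul_sub]
    rw [hρdiff] at h1
    have hnn1 : (0:ℝ) ≤ ‖gradPz k S q f h lam u v ((1:ℝ), (0:EuclideanSpace ℝ (Fin k)), (0:Fin S → ℝ))
        - gradPz k S q f h lam u v ((0:ℝ), (0:EuclideanSpace ℝ (Fin k)), (0:Fin S → ℝ))‖ ^ 2 :=
      sq_nonneg _
    have hnn2 : (0:ℝ) ≤ ∑ s, (gradPδ k S q f h lam u v ((1:ℝ), (0:EuclideanSpace ℝ (Fin k)), (0:Fin S → ℝ)) s
        - gradPδ k S q f h lam u v ((0:ℝ), (0:EuclideanSpace ℝ (Fin k)), (0:Fin S → ℝ)) s) ^ 2 :=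
      Finset.sum_nonneg fun s _ => sq_nonneg _
    have hsq : (v * S) ^ 2 ≤ LP ^ 2 := by
      simp only [Pi.zero_apply, sub_zero, sub_self, norm_zero] at h1
      rw [show ∑ _x : Fin S, (0:ℝ)^2 = 0 from by simp] at h1
      norm_num at h1
      nlinarith [h1, sq_nonneg ‖gradPz k S q f h lam u v (1, 0) - gradPz k S q f h lam u v 0‖,
        Finset.sum_nonneg (s := Finset.univ)
          (fun (x : Fin S) _ => sq_nonneg (gradPδ k S q f h lam u v (1, 0) x
            - gradPδ k S q f h lam u v 0 x))]
    nlinarith [hsq, hvSnn, hLP]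
  -- Step 2: `η * (v * S) ≤ 1`
  have hηvS : η * (v * S) ≤ 1 := by
    have : η * (v * S) ≤ (1 / LP) * LP :=
      mul_le_mul hηLP hvSLP hvSnn (by positivity)
    rwa [one_div_mul_cancel (ne_of_gt hLP)] at this
  have hηle : η ≤ η * (v * S) := by nlinarith [hηpos]
  -- Step 3: induction invariant `ρ_t ≥ -1` and `δ_t ≥ 0`.
  have inv : ∀ t, -1 ≤ (θ t).1 ∧ ∀ s, 0 ≤ (θ t).2.2 s := by
    intro t
    induction t with
    | zero =>
      rw [hθ0]
      exact ⟨by linarith, hδ₀⟩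
    | succ t ih =>
      obtain ⟨hρ, hδ⟩ := ih
      rw [hθstep t]
      constructor
      · show -1 ≤ (θ t).1 - η * gradPρ k S q f h lam u v (θ t)
        have hsum : ∑ s, (lam s * f s (θ t).2.1 + (θ t).2.2 s - (θ t).1)
            = (∑ s, lam s * f s (θ t).2.1) + (∑ s, (θ t).2.2 s) - S * (θ t).1 := by
          rw [Finset.sum_sub_distrib, Finset.sum_add_distrib]
          simp [mul_comm]
        have hA : (0:ℝ) ≤ ∑ s, lam s * f s (θ t).2.1 :=
          Finset.sum_nonneg fun s _ => mul_nonneg (hlam_pos s).le (hfpos s _).le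
        have hD : (0:ℝ) ≤ ∑ s, (θ t).2.2 s := Finset.sum_nonneg fun s _ => hδ s
        rw [gradPρ, hsum]
        nlinarith [mul_nonneg (sub_nonneg.2 hηvS) (by linarith : (0:ℝ) ≤ (θ t).1 + 1),
          mul_nonneg (mul_nonneg hηpos.le hv.le) (add_nonneg hA hD)]
      · intro s
        exact le_max_right _ 0
  intro t
  have := (inv t).1
  linarith


end
end
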